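/- If real-valued random variables d_1,...,d_N, d_{N+1} are exchangeable, then the probability that d_{N+1} is at most the ⌈(1-α)(N+1)⌉-th smallest value among d_1,...,d_N is at least 1-α, provided α ∈ (0,1) and ⌈(1-α)(N+1)⌉ ≤ N. -/

import Mathlib

open MeasureTheory

/-- The `k`-th smallest value (0-indexed) among `d 0, …, d (N-1)`. -/
noncomputable def orderStat {N : ℕ} (d : Fin N → ℝ) (k : Fin N) : ℝ :=
  d (Tuple.sort d k)

section Aux

open Finset

lemma card_filter_val_lt (n k : ℕ) (hk : k ≤ n) :
    ((Finset.univ : Finset (Fin n)).filter fun j : Fin n => (j : ℕ) < k).card = k := by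
  classical
  rcases eq_or_lt_of_le hk with rfl | hlt
  · have h : ((Finset.univ : Finset (Fin k)).filter fun j : Fin k => (j : ℕ) < k)
        = Finset.univ := by
      ext j
      simp [j.isLt]
    simp [h]
  · have h : ((Finset.univ : Finset (Fin n)).filter fun j : Fin n => (j : ℕ) < k)
        = Finset.Iio (⟨k, hlt⟩ : Fin n) := by
      ext j
      simp [Fin.lt_def]
    rw [h, Fin.card_Iio]

lemma measurable_card_filter {δ : Type*} [MeasurableSpace δ] {n : ℕ}
    (p : Fin n → δ → Prop) [∀ i x, Decidable (p i x)]
    (hp : ∀ i, MeasurableSet {x | p i x}) :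
    Measurable fun x => ((Finset.univ : Finset (Fin n)).filter fun i => p i x).card := by
  have h : (fun x => ((Finset.univ : Finset (Fin n)).filter fun i => p i x).card)
      = fun x => ∑ i : Fin n, if p i x then 1 else 0 := by
    funext x
    exact Finset.card_filter _ _
  rw [h]
  apply Finset.measurable_sum
  intro i _
  exact Measurable.ite (hp i) measurable_const measurable_const

lemma le_orderStat_of_card_lt {N : ℕ} (y : Fin N → ℝ) (t : ℝ) (k : ℕ)
    (hk1 : 1 ≤ k) (hkN : k ≤ N)
    (h : ((Finset.univ : Finset (Fin N)).filter fun i => y i < t).card < k) :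
    t ≤ orderStat y ⟨k - 1, by omega⟩ := by
  classical
  by_contra hc
  push_neg at hc
  have hmono := Tuple.monotone_sort y
  have hsub : ((Finset.univ : Finset (Fin N)).filter fun j : Fin N => (j : ℕ) < k).image
      (Tuple.sort y) ⊆ (Finset.univ : Finset (Fin N)).filter fun i => y i < t := by
    intro i hi
    simp only [Finset.mem_image, Finset.mem_filter, Finset.mem_univ, true_and] at hi ⊢
    obtain ⟨j, hj, rfl⟩ := hi
    have hle : j ≤ (⟨k - 1, by omega⟩ : Fin N) := by
      rw [Fin.le_def]; simp; omega
    have : y (Tuple.sort y j) ≤ y (Tuple.sort y ⟨k - 1, by omega⟩) := hmono hle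
    exact lt_of_le_of_lt this hc
  have hcard : (((Finset.univ : Finset (Fin N)).filter fun j : Fin N => (j : ℕ) < k).image
      (Tuple.sort y)).card = k := by
    rw [Finset.card_image_of_injective _ (Tuple.sort y).injective,
      card_filter_val_lt N k hkN]
  have := Finset.card_le_card hsub
  omega

lemma card_rank_lt {n : ℕ} {L : Type*} [LinearOrder L] (e : Fin n → L)
    (he : Function.Injective e) (k : ℕ) (hk : k ≤ n) :
    ((Finset.univ : Finset (Fin n)).filter fun j =>
      ((Finset.univ : Finset (Fin n)).filter fun i => e i < e j).card < k).card = k := by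
  classical
  set r : Fin n → ℕ := fun j => ((Finset.univ : Finset (Fin n)).filter fun i => e i < e j).card
    with hr
  have hrlt : ∀ j, r j < n := by
    intro j
    have hss : ((Finset.univ : Finset (Fin n)).filter fun i => e i < e j) ⊂ Finset.univ := by
      refine ⟨Finset.filter_subset _ _, fun hsub => ?_⟩
      have := hsub (Finset.mem_univ j)
      simp at this
    simpa using Finset.card_lt_card hss
  have hrmono : ∀ {i j : Fin n}, e i < e j → r i < r j := by
    intro i j hij
    apply Finset.card_lt_card
    constructor
    · intro a ha
      simp only [Finset.mem_filter, Finset.mem_univ, true_and] at ha ⊢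
      exact lt_trans ha hij
    · intro hsub
      have := hsub (by simp [hij] : i ∈ (Finset.univ : Finset (Fin n)).filter fun a => e a < e j)
      simp at this
  have hinj : Function.Injective (fun j => (⟨r j, hrlt j⟩ : Fin n)) := by
    intro i j hij
    by_contra hne
    have hv : r i = r j := congrArg Fin.val hij
    rcases lt_or_gt_of_ne (he.ne hne) with h' | h'
    · exact absurd hv (Nat.ne_of_lt (hrmono h'))
    · exact absurd hv.symm (Nat.ne_of_lt (hrmono h'))
  have hsurj := (Finite.injective_iff_bijective.mp hinj).2
  have hcardeq : ((Finset.univ : Finset (Fin n)).filter fun j => r j < k).card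
      = ((Finset.univ : Finset (Fin n)).filter fun m : Fin n => (m : ℕ) < k).card := by
    apply Finset.card_bij (fun j _ => (⟨r j, hrlt j⟩ : Fin n))
    · intro a ha
      simp only [Finset.mem_filter, Finset.mem_univ, true_and] at ha ⊢
      exact ha
    · intro a _ b _ hab
      exact hinj hab
    · intro b hb
      simp only [Finset.mem_filter, Finset.mem_univ, true_and] at hb
      obtain ⟨a, ha⟩ := hsurj b
      refine ⟨a, ?_, ha⟩
      simp only [Finset.mem_filter, Finset.mem_univ, true_and]
      have : r a = (b : ℕ) := congrArg Fin.val ha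
      omega
  rw [hcardeq, card_filter_val_lt n k hk]

end Aux

/-- split conformal calibration lemma. If `d_1, …, d_{N+1}` are exchangeable,
then the probability that `d_{N+1}` is at most the `⌈(1-α)(N+1)⌉`-th smallest value among
`d_1, …, d_N` is at least `1 - α`. -/
theorem conformal_calibration_coverage
    {Ω : Type*} [MeasurableSpace Ω] (ℙ : Measure Ω) [IsProbabilityMeasure ℙ]
    {N : ℕ} (hN : 0 < N)
    (d : Fin (N + 1) → Ω → ℝ) (hd : ∀ i, Measurable (d i))
    (hexch : ∀ π : Equiv.Perm (Fin (N + 1)),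
      Measure.map (fun ω => fun i => d (π i) ω) ℙ =
      Measure.map (fun ω => fun i => d i ω) ℙ)
    (α : ℝ) (hα : α ∈ Set.Ioo (0 : ℝ) 1)
    (k : ℕ) (hk : k = ⌈(1 - α) * (N + 1)⌉₊) (hkN : k ≤ N) :
    ℙ {ω | d (Fin.last N) ω ≤
        orderStat (fun i : Fin N => d i.castSucc ω) ⟨k - 1, by omega⟩} ≥
      ENNReal.ofReal (1 - α) := by
  classical
  obtain ⟨hα0, hα1⟩ := hα
  have hα1' : (0:ℝ) < 1 - α := by linarith
  have hk1 : 1 ≤ k := by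
    rw [hk]
    exact Nat.one_le_ceil_iff.mpr (mul_pos (by linarith) (by positivity))
  set D : Ω → (Fin (N + 1) → ℝ) := fun ω i => d i ω with hD_def
  have hD : Measurable D := measurable_pi_lambda _ hd
  set rnk : (Fin (N + 1) → ℝ) → Fin (N + 1) → ℕ := fun x j =>
    ((Finset.univ : Finset (Fin (N + 1))).filter
      fun i => x i < x j ∨ (x i = x j ∧ j < i)).card with hrnk_def
  set cnt : (Fin (N + 1) → ℝ) → Fin (N + 1) → ℕ := fun x j =>
    ((Finset.univ : Finset (Fin (N + 1))).filter fun i => x i < x j).card with hcnt_def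
  have hrnk_meas : ∀ j, Measurable fun x => rnk x j := by
    intro j
    simp only [hrnk_def]
    apply measurable_card_filter (δ := Fin (N + 1) → ℝ) (n := N + 1)
      (fun i x => x i < x j ∨ (x i = x j ∧ j < i))
    intro i
    exact ((measurableSet_lt (measurable_pi_apply i) (measurable_pi_apply j)).union
      ((measurableSet_eq_fun (measurable_pi_apply i) (measurable_pi_apply j)).inter
        (MeasurableSet.const _)))
  have hcnt_meas : ∀ j, Measurable fun x => cnt x j := by
    intro j
    simp only [hcnt_def]
    apply measurable_card_filter (δ := Fin (N + 1) → ℝ) (n := N + 1) (fun i x => x i < x j)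
    intro i
    exact measurableSet_lt (measurable_pi_apply i) (measurable_pi_apply j)
  set A : Fin (N + 1) → Set Ω := fun j => D ⁻¹' {x | rnk x j < k} with hA_def
  have hAmeas : ∀ j, MeasurableSet (A j) := by
    intro j
    exact hD ((hrnk_meas j) (MeasurableSet.of_discrete (s := Set.Iio k)))
  -- pointwise: exactly k indices have rank < k
  have hpoint : ∀ x : Fin (N + 1) → ℝ,
      ((Finset.univ : Finset (Fin (N + 1))).filter fun j => rnk x j < k).card = k := by
    intro x
    set e : Fin (N + 1) → Lex (ℝ × (Fin (N + 1))ᵒᵈ) :=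
      fun j => toLex (x j, OrderDual.toDual j) with he_def
    have he_inj : Function.Injective e := by
      intro a b hab
      have := congrArg (fun p => (ofLex p).2) hab
      simpa [he_def] using this
    have hcond : ∀ j i : Fin (N + 1),
        e i < e j ↔ (x i < x j ∨ (x i = x j ∧ j < i)) := by
      intro j i
      rw [he_def, Prod.Lex.lt_iff]
      simp only [ofLex_toLex, OrderDual.toDual_lt_toDual]
    have hfe : ∀ j, rnk x j
        = ((Finset.univ : Finset (Fin (N + 1))).filter fun i => e i < e j).card := by
      intro j
      simp only [hrnk_def]
      congr 1
      apply Finset.filter_congr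
      intro i _
      exact (hcond j i).symm
    have hset : ((Finset.univ : Finset (Fin (N + 1))).filter fun j => rnk x j < k)
        = ((Finset.univ : Finset (Fin (N + 1))).filter fun j =>
            ((Finset.univ : Finset (Fin (N + 1))).filter fun i => e i < e j).card < k) := by
      apply Finset.filter_congr
      intro j _
      rw [hfe j]
    rw [hset, card_rank_lt e he_inj k (by omega)]
  -- sum of probabilities equals k
  have hsum : ∑ j : Fin (N + 1), ℙ (A j) = (k : ENNReal) := by
    have hptw : ∀ ω, (∑ j : Fin (N + 1),
        (A j).indicator (fun _ => (1 : ENNReal)) ω) = (k : ENNReal) := by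
      intro ω
      have : (∑ j : Fin (N + 1), (A j).indicator (fun _ => (1 : ENNReal)) ω)
          = ∑ j : Fin (N + 1), if rnk (D ω) j < k then 1 else 0 := by
        apply Finset.sum_congr rfl
        intro j _
        simp [Set.indicator_apply, hA_def, Set.mem_preimage]
      rw [this, Finset.sum_boole]
      rw [hpoint (D ω)]
    calc ∑ j : Fin (N + 1), ℙ (A j)
        = ∑ j : Fin (N + 1), ∫⁻ ω, (A j).indicator (fun _ => (1 : ENNReal)) ω ∂ℙ := by
          apply Finset.sum_congr rfl
          intro j _
          rw [lintegral_indicator (hAmeas j)]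
          simp
      _ = ∫⁻ ω, ∑ j : Fin (N + 1), (A j).indicator (fun _ => (1 : ENNReal)) ω ∂ℙ := by
          rw [lintegral_finset_sum]
          intro j _
          exact (measurable_const.indicator (hAmeas j))
      _ = ∫⁻ _, (k : ENNReal) ∂ℙ := by
          apply lintegral_congr
          intro ω
          exact hptw ω
      _ = (k : ENNReal) := by simp
  -- each ℙ (A j) is at most ℙ (A last)
  have hAC : ∀ j : Fin (N + 1), ℙ (A j) ≤ ℙ (A (Fin.last N)) := by
    intro j
    have h1 : A j ⊆ D ⁻¹' {x | cnt x j < k} := by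
      intro ω hω
      simp only [Set.mem_preimage, Set.mem_setOf_eq] at hω ⊢
      refine lt_of_le_of_lt ?_ hω
      apply Finset.card_le_card
      exact Finset.monotone_filter_right _ (fun i _ hi => Or.inl hi)
    have h3 : A (Fin.last N) = D ⁻¹' {x | cnt x (Fin.last N) < k} := by
      apply congrArg (D ⁻¹' ·)
      ext x
      simp only [Set.mem_setOf_eq]
      have : ((Finset.univ : Finset (Fin (N + 1))).filter
          fun i => x i < x (Fin.last N) ∨ (x i = x (Fin.last N) ∧ Fin.last N < i)) =
          ((Finset.univ : Finset (Fin (N + 1))).filter fun i => x i < x (Fin.last N)) := by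
        apply Finset.filter_congr
        intro i _
        constructor
        · rintro (h | ⟨_, hlt⟩)
          · exact h
          · exact absurd hlt (not_lt.mpr (Fin.le_last i))
        · exact Or.inl
      simp only [hrnk_def, hcnt_def, this]
    have hS : MeasurableSet {x : Fin (N + 1) → ℝ | cnt x (Fin.last N) < k} :=
      (hcnt_meas (Fin.last N)) (MeasurableSet.of_discrete (s := Set.Iio k))
    have h2 : ℙ (D ⁻¹' {x | cnt x j < k}) = ℙ (D ⁻¹' {x | cnt x (Fin.last N) < k}) := by
      have hπ := hexch (Equiv.swap (Fin.last N) j)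
      have hmeasπ : Measurable fun ω => fun i => d ((Equiv.swap (Fin.last N) j) i) ω :=
        measurable_pi_lambda _ (fun i => hd _)
      have := congrArg (fun μ => μ {x | cnt x (Fin.last N) < k}) hπ
      rw [Measure.map_apply hmeasπ hS, Measure.map_apply hD hS] at this
      have hpre : (fun ω => fun i => d ((Equiv.swap (Fin.last N) j) i) ω) ⁻¹'
          {x | cnt x (Fin.last N) < k} = D ⁻¹' {x | cnt x j < k} := by
        ext ω
        simp only [Set.mem_preimage, Set.mem_setOf_eq, hcnt_def]
        have hswap : (Equiv.swap (Fin.last N) j) (Fin.last N) = j := Equiv.swap_apply_left _ _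
        have hcards : ((Finset.univ : Finset (Fin (N + 1))).filter
            fun i => d ((Equiv.swap (Fin.last N) j) i) ω
              < d ((Equiv.swap (Fin.last N) j) (Fin.last N)) ω).card =
            ((Finset.univ : Finset (Fin (N + 1))).filter
              fun i => D ω i < D ω j).card := by
          rw [hswap]
          apply Finset.card_nbij (fun i => (Equiv.swap (Fin.last N) j) i)
          · intro a ha
            simp only [Finset.mem_coe, Finset.mem_filter, Finset.mem_univ, true_and] at ha ⊢
            exact ha
          · exact Function.Injective.injOn (Equiv.injective _)
          · intro b hb
            simp only [Finset.coe_filter, Set.mem_image, Set.mem_setOf_eq,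
              Finset.mem_univ, true_and] at hb ⊢
            exact ⟨(Equiv.swap (Fin.last N) j).symm b, by simpa using hb, by simp⟩
        rw [hcards]
      rw [hpre] at this
      exact this
    calc ℙ (A j) ≤ ℙ (D ⁻¹' {x | cnt x j < k}) := measure_mono h1
      _ = ℙ (D ⁻¹' {x | cnt x (Fin.last N) < k}) := h2
      _ = ℙ (A (Fin.last N)) := by rw [h3]
  -- combine: k ≤ (N+1) * ℙ (A last)
  have hklen : (k : ENNReal) ≤ (N + 1 : ENNReal) * ℙ (A (Fin.last N)) := by
    calc (k : ENNReal) = ∑ j : Fin (N + 1), ℙ (A j) := hsum.symm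
      _ ≤ ∑ _j : Fin (N + 1), ℙ (A (Fin.last N)) := Finset.sum_le_sum fun j _ => hAC j
      _ = (N + 1 : ENNReal) * ℙ (A (Fin.last N)) := by
          simp [Finset.sum_const, nsmul_eq_mul]
  have hfinal : ENNReal.ofReal (1 - α) ≤ ℙ (A (Fin.last N)) := by
    have hne0 : ((N : ENNReal) + 1) ≠ 0 := by
      intro h
      exact one_ne_zero (add_eq_zero.mp h).2
    have hnetop : ((N : ENNReal) + 1) ≠ ⊤ := by
      simp [ENNReal.natCast_ne_top]
    have h1 : ENNReal.ofReal (1 - α) ≤ (k : ENNReal) / ((N : ENNReal) + 1) := by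
      rw [ENNReal.le_div_iff_mul_le (Or.inl hne0) (Or.inl hnetop)]
      have hcast : ((N : ENNReal) + 1) = ENNReal.ofReal ((N : ℝ) + 1) := by
        rw [ENNReal.ofReal_add (by positivity) (by norm_num)]
        simp [ENNReal.ofReal_natCast]
      rw [hcast, ← ENNReal.ofReal_mul (le_of_lt hα1')]
      have hle : (1 - α) * ((N : ℝ) + 1) ≤ (k : ℝ) := by
        rw [hk]
        exact_mod_cast Nat.le_ceil ((1 - α) * ((N : ℝ) + 1))
      calc ENNReal.ofReal ((1 - α) * ((N : ℝ) + 1)) ≤ ENNReal.ofReal (k : ℝ) :=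
            ENNReal.ofReal_le_ofReal hle
        _ = (k : ENNReal) := ENNReal.ofReal_natCast k
    have h2 : (k : ENNReal) / ((N : ENNReal) + 1) ≤ ℙ (A (Fin.last N)) := by
      apply ENNReal.div_le_of_le_mul
      calc (k : ENNReal) ≤ (N + 1 : ENNReal) * ℙ (A (Fin.last N)) := hklen
        _ = ℙ (A (Fin.last N)) * ((N : ENNReal) + 1) := by ring
    exact h1.trans h2
  -- inclusion into the target event
  have hincl : A (Fin.last N) ⊆ {ω | d (Fin.last N) ω ≤
      orderStat (fun i : Fin N => d i.castSucc ω) ⟨k - 1, by omega⟩} := by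
    intro ω hω
    simp only [hA_def, Set.mem_preimage, Set.mem_setOf_eq] at hω ⊢
    have hc : ((Finset.univ : Finset (Fin N)).filter
        fun i => d i.castSucc ω < d (Fin.last N) ω).card < k := by
      refine lt_of_le_of_lt ?_ hω
      simp only [hrnk_def]
      apply Finset.card_le_card_of_injOn (fun i => i.castSucc)
      · intro a ha
        simp only [Finset.mem_coe, Finset.mem_filter, Finset.mem_univ, true_and] at ha ⊢
        exact Or.inl ha
      · exact fun a _ b _ hab => Fin.castSucc_injective N hab
    exact le_orderStat_of_card_lt (fun i : Fin N => d i.castSucc ω)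
      (d (Fin.last N) ω) k hk1 hkN hc
  exact le_trans hfinal (measure_mono hincl)
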